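/- The Fibonacci fourth powers satisfy F(n+5)^4 = 5·F(n+4)^4 + 15·F(n+3)^4 − 15·F(n+2)^4 − 5·F(n+1)^4 + F(n)^4 for all n ≥ 0. -/
import Mathlib

/-- The fourth powers of the Fibonacci numbers satisfy
`F(n+5)^4 = 5 F(n+4)^4 + 15 F(n+3)^4 - 15 F(n+2)^4 - 5 F(n+1)^4 + F(n)^4`. -/
theorem stmt5 (F : ℕ → ℤ) (h0 : F 0 = 0) (h1 : F 1 = 1)
    (hrec : ∀ n : ℕ, F (n + 2) = F (n + 1) + F n) :
    ∀ n : ℕ, F (n + 5) ^ 4 =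
      5 * F (n + 4) ^ 4 + 15 * F (n + 3) ^ 4 - 15 * F (n + 2) ^ 4
        - 5 * F (n + 1) ^ 4 + F n ^ 4 := by
  intro n
  have e2 := hrec n
  have e3 := hrec (n + 1)
  have e4 := hrec (n + 2)
  have e5 := hrec (n + 3)
  simp only [show n+1+2 = n+3 by ring, show n+2+2 = n+4 by ring,
    show n+3+2 = n+5 by ring, show n+1+1 = n+2 by ring,
    show n+2+1 = n+3 by ring, show n+3+1 = n+4 by ring] at e3 e4 e5
  rw [e5, e4, e3, e2]; ring
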